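/- For every input x ∈ {0,1}^{2^d} to the depth-d NAND-tree: if d is even, then R_{s,t}(G_{NAND_d}(x)) ≤ F_A(x) and R_{s',t'}(G'_{NAND_d}(x)) ≤ F_B(x); if d is odd, then R_{s,t}(G_{NAND_d}(x)) ≤ 2F_A(x) and R_{s',t'}(G'_{NAND_d}(x)) ≤ 2F_B(x). (Here effective resistances use unit edge weights, and both sides may be ∞.) -/

import Mathlib

open scoped ENNReal

namespace STConn

variable {V E : Type*}

/-- `v` is an endpoint of edge `e`. -/
def Touches (ends : E → V × V) (e : E) (v : V) : Prop :=
  (ends e).1 = v ∨ (ends e).2 = v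

/-- Net flow out of vertex `v` for an edge-valued function `θ` (value along the
fixed orientation of each edge). -/
noncomputable def netflow [Fintype E] [DecidableEq V] (ends : E → V × V) (θ : E → ℝ) (v : V) : ℝ :=
  ∑ e, θ e * ((if (ends e).1 = v then (1:ℝ) else 0) - (if (ends e).2 = v then 1 else 0))

/-- `θ` is a unit `st`-flow: net flow `+1` at `s`, `-1` at `t`, `0` elsewhere. -/
def IsUnitFlow [Fintype E] [DecidableEq V] (ends : E → V × V) (s t : V) (θ : E → ℝ) : Prop :=
  ∀ v, netflow ends θ v = (if v = s then (1:ℝ) else 0) - (if v = t then 1 else 0)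

/-- Energy of a flow with respect to edge weights `c`. -/
noncomputable def energy [Fintype E] (c : E → ℝ) (θ : E → ℝ) : ℝ :=
  ∑ e, θ e ^ 2 / c e

/-- Effective resistance between `s` and `t`, restricted to flows supported on `S`
(taking value `∞` if no unit `st`-flow supported on `S` exists). -/
noncomputable def effResOn [Fintype E] [DecidableEq V] (ends : E → V × V) (c : E → ℝ)
    (S : Set E) (s t : V) : ℝ≥0∞ :=
  ⨅ θ : {θ : E → ℝ // IsUnitFlow ends s t θ ∧ ∀ e ∉ S, θ e = 0},
    ENNReal.ofReal (energy c θ.1)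

/-- Effective resistance between `s` and `t` in the network `(ends, c)`. -/
noncomputable def effRes [Fintype E] [DecidableEq V] (ends : E → V × V) (c : E → ℝ)
    (s t : V) : ℝ≥0∞ :=
  effResOn ends c Set.univ s t

end STConn

namespace STConn

/-- Read-once AND-OR formulas on `N` variables (gates have fan-in `k+1`). -/
inductive Formula (N : ℕ) : Type where
  | var : Fin N → Formula N
  | and : (k : ℕ) → (Fin (k + 1) → Formula N) → Formula N
  | or : (k : ℕ) → (Fin (k + 1) → Formula N) → Formula N

namespace Formula

variable {N : ℕ}

/-- Evaluation of a formula on an input. -/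
def eval : Formula N → (Fin N → Bool) → Bool
  | .var i, x => x i
  | .and _ fs, x => (List.finRange _).all fun i => (fs i).eval x
  | .or _ fs, x => (List.finRange _).any fun i => (fs i).eval x

/-- The leaves of a formula; these index the edges of the graph `G_φ`. -/
def Leaves : Formula N → Type
  | .var _ => Unit
  | .and k fs => Σ i : Fin (k + 1), (fs i).Leaves
  | .or k fs => Σ i : Fin (k + 1), (fs i).Leaves

/-- The variable labelling a leaf. -/
def label : (φ : Formula N) → φ.Leaves → Fin N
  | .var i, _ => i
  | .and _ fs, ⟨i, l⟩ => (fs i).label l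
  | .or _ fs, ⟨i, l⟩ => (fs i).label l

/-- The internal (non-terminal) vertices of the series-parallel graph `G_φ`:
series composition (for `∧`) introduces `k` junction vertices. -/
def Inner : Formula N → Type
  | .var _ => Empty
  | .and k fs => (Σ i : Fin (k + 1), (fs i).Inner) ⊕ Fin k
  | .or k fs => Σ i : Fin (k + 1), (fs i).Inner

/-- The vertex set of `G_φ`: internal vertices plus the two terminals
(`Sum.inr true = s`, `Sum.inr false = t`). -/
abbrev Vert (φ : Formula N) : Type := φ.Inner ⊕ Bool

/-- Embedding the vertices of the `i`-th subgraph into a series composition. -/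
def vmapAnd (k : ℕ) (fs : Fin (k + 1) → Formula N) (i : Fin (k + 1)) :
    (fs i).Vert → (Formula.and k fs).Vert
  | .inl w => .inl (.inl ⟨i, w⟩)
  | .inr true =>
      if h : i.val = 0 then .inr true
      else .inl (.inr ⟨i.val - 1, by have := i.isLt; omega⟩)
  | .inr false =>
      if h : i.val = k then .inr false
      else .inl (.inr ⟨i.val, by have := i.isLt; omega⟩)

/-- Embedding the vertices of the `i`-th subgraph into a parallel composition. -/
def vmapOr (k : ℕ) (fs : Fin (k + 1) → Formula N) (i : Fin (k + 1)) :
    (fs i).Vert → (Formula.or k fs).Vert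
  | .inl w => .inl ⟨i, w⟩
  | .inr b => .inr b

/-- The endpoints of each edge (= leaf) of the series-parallel graph `G_φ`:
a variable is a single `st`-edge, `∧` composes the subgraphs in series, and
`∨` composes them in parallel. -/
def ends : (φ : Formula N) → φ.Leaves → φ.Vert × φ.Vert
  | .var _, _ => (.inr true, .inr false)
  | .and k fs, ⟨i, l⟩ =>
      (vmapAnd k fs i ((fs i).ends l).1, vmapAnd k fs i ((fs i).ends l).2)
  | .or k fs, ⟨i, l⟩ =>
      (vmapOr k fs i ((fs i).ends l).1, vmapOr k fs i ((fs i).ends l).2)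

/-- The dual formula: swap every `∧` with `∨`. -/
def dualF : Formula N → Formula N
  | .var i => .var i
  | .and k fs => .or k fun i => dualF (fs i)
  | .or k fs => .and k fun i => dualF (fs i)

def leavesFintype : (φ : Formula N) → Fintype φ.Leaves
  | .var _ => inferInstanceAs (Fintype Unit)
  | .and k fs =>
      letI := fun i => leavesFintype (fs i)
      inferInstanceAs (Fintype (Σ i : Fin (k + 1), (fs i).Leaves))
  | .or k fs =>
      letI := fun i => leavesFintype (fs i)
      inferInstanceAs (Fintype (Σ i : Fin (k + 1), (fs i).Leaves))

instance (φ : Formula N) : Fintype φ.Leaves := leavesFintype φ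

def innerDecEq : (φ : Formula N) → DecidableEq φ.Inner
  | .var _ => fun a => a.elim
  | .and k fs =>
      letI := fun i => innerDecEq (fs i)
      inferInstanceAs (DecidableEq ((Σ i : Fin (k + 1), (fs i).Inner) ⊕ Fin k))
  | .or k fs =>
      letI := fun i => innerDecEq (fs i)
      inferInstanceAs (DecidableEq (Σ i : Fin (k + 1), (fs i).Inner))

instance (φ : Formula N) : DecidableEq φ.Inner := innerDecEq φ

instance (φ : Formula N) : DecidableEq φ.Vert :=
  inferInstanceAs (DecidableEq (φ.Inner ⊕ Bool))

/-- The source terminal `s` of `G_φ`. -/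
def src (φ : Formula N) : φ.Vert := .inr true

/-- The sink terminal `t` of `G_φ`. -/
def snk (φ : Formula N) : φ.Vert := .inr false

end Formula
end STConn
namespace STConn
namespace Formula

/-- Relabel the variables of a formula along `f`. -/
def relabel {N M : ℕ} (f : Fin N → Fin M) : Formula N → Formula M
  | .var i => .var (f i)
  | .and k fs => .and k fun i => (fs i).relabel f
  | .or k fs => .or k fun i => (fs i).relabel f

end Formula

/-- The embedding of the `i`-th half of `Fin (2^(d+1))`. -/
def embed (d : ℕ) (i : Fin 2) : Fin (2 ^ d) → Fin (2 ^ (d + 1)) := fun j =>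
  ⟨i.val * 2 ^ d + j.val, by
    have hj := j.isLt
    have hi : i.val * 2 ^ d ≤ 1 * 2 ^ d :=
      Nat.mul_le_mul_right _ (Nat.lt_succ_iff.mp i.isLt)
    have h2 : 2 ^ (d + 1) = 2 ^ d + 2 ^ d := by ring
    omega⟩

/-- The depth-`d` NAND-tree formula: a full binary AND-OR tree on `2^d`
variables with `∨`-gates at even distance from the leaves and `∧`-gates at odd
distance (so the root is `∧` iff `d` is odd); `NAND₀` is a single variable. -/
def nandTree : (d : ℕ) → Formula (2 ^ d)
  | 0 => .var ⟨0, Nat.one_pos⟩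
  | d + 1 =>
      if (d + 1) % 2 = 1 then
        .and 1 fun i => (nandTree d).relabel (embed d i)
      else
        .or 1 fun i => (nandTree d).relabel (embed d i)

/-- The input to the `i`-th principal subtree of a depth-`(d+1)` NAND-tree. -/
def half (d : ℕ) (i : Fin 2) (x : Fin (2 ^ (d + 1)) → Bool) : Fin (2 ^ d) → Bool :=
  fun j => x (embed d i j)

end STConn
namespace STConn

open Formula

/-- Maximum number of faults Player A can encounter at her decision nodes along
a game path in `P_A(x)` (paths through A-winnable subtrees only): at an
`∨`-node (A's turn) a fault occurs when exactly one child subtree is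
A-winnable, and the path must continue into an A-winnable child; at an
`∧`-node (B's turn) the adversary may go either way.  (Meaningful for
A-winnable inputs.) -/
def maxFaultA : (d : ℕ) → (Fin (2 ^ d) → Bool) → ℕ
  | 0, _ => 0
  | d + 1, x =>
    let vL := (nandTree d).eval (half d 0 x)
    let vR := (nandTree d).eval (half d 1 x)
    if (d + 1) % 2 = 1 then
      -- ∧-node: Player B's turn; both subtrees are A-winnable when x is
      max (maxFaultA d (half d 0 x)) (maxFaultA d (half d 1 x))
    else
      -- ∨-node: Player A's turn
      if vL && vR then max (maxFaultA d (half d 0 x)) (maxFaultA d (half d 1 x))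
      else if vL then 1 + maxFaultA d (half d 0 x)
      else if vR then 1 + maxFaultA d (half d 1 x)
      else 0

/-- Maximum number of faults Player B can encounter at his decision nodes along
a game path in `P_B(x)`: at an `∧`-node (B's turn) a fault occurs when exactly
one child subtree is B-winnable.  (Meaningful for B-winnable inputs.) -/
def maxFaultB : (d : ℕ) → (Fin (2 ^ d) → Bool) → ℕ
  | 0, _ => 0
  | d + 1, x =>
    let vL := (nandTree d).eval (half d 0 x)
    let vR := (nandTree d).eval (half d 1 x)
    if (d + 1) % 2 = 1 then
      -- ∧-node: Player B's turn
      if !vL && !vR then max (maxFaultB d (half d 0 x)) (maxFaultB d (half d 1 x))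
      else if !vL then 1 + maxFaultB d (half d 0 x)
      else if !vR then 1 + maxFaultB d (half d 1 x)
      else 0
    else
      -- ∨-node: Player A's turn; both subtrees are B-winnable when x is
      max (maxFaultB d (half d 0 x)) (maxFaultB d (half d 1 x))

/-- The fault complexity `F_A(x) = 2^{max_{p ∈ P_A(x)} f_A(p)}` for A-winnable
inputs `x`, and `∞` otherwise. -/
noncomputable def faultA (d : ℕ) (x : Fin (2 ^ d) → Bool) : ℝ≥0∞ :=
  if (nandTree d).eval x = true then (2 : ℝ≥0∞) ^ maxFaultA d x else ⊤

/-- The fault complexity `F_B(x) = 2^{max_{p ∈ P_B(x)} f_B(p)}` for B-winnable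
inputs `x`, and `∞` otherwise. -/
noncomputable def faultB (d : ℕ) (x : Fin (2 ^ d) → Bool) : ℝ≥0∞ :=
  if (nandTree d).eval x = false then (2 : ℝ≥0∞) ^ maxFaultB d x else ⊤

end STConn

namespace STConn

open Formula

variable {N M : ℕ}

/-- Existence of a unit flow supported on `S` with energy (unit weights) at most `r`. -/
def FB (φ : Formula N) (S : Set φ.Leaves) (r : ℝ) : Prop :=
  ∃ θ : φ.Leaves → ℝ, IsUnitFlow φ.ends φ.src φ.snk θ ∧ (∀ l ∉ S, θ l = 0) ∧
    energy (fun _ => (1:ℝ)) θ ≤ r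

lemma effResOn_le_of_FB {φ : Formula N} {S : Set φ.Leaves} {r : ℝ}
    (h : FB φ S r) :
    effResOn φ.ends (fun _ => (1:ℝ)) S φ.src φ.snk ≤ ENNReal.ofReal r := by
  obtain ⟨θ, h1, h2, h3⟩ := h
  exact le_trans (iInf_le _ ⟨θ, h1, h2⟩) (ENNReal.ofReal_le_ofReal h3)

lemma FB_mono {φ : Formula N} {S : Set φ.Leaves} {r r' : ℝ}
    (h : FB φ S r) (hr : r ≤ r') : FB φ S r' := by
  obtain ⟨θ, h1, h2, h3⟩ := h
  exact ⟨θ, h1, h2, h3.trans hr⟩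

lemma energy_one {E : Type*} [Fintype E] (θ : E → ℝ) :
    energy (fun _ => (1:ℝ)) θ = ∑ e, θ e ^ 2 := by
  simp [energy]

lemma sum_push {E₁ V₁ V₂ : Type*} [Fintype E₁] [DecidableEq V₁] [DecidableEq V₂]
    (ends₁ : E₁ → V₁ × V₁) (g : V₁ → V₂) (hg : Function.Injective g)
    (θ : E₁ → ℝ) (u : V₁) :
    ∑ e, θ e * ((if g (ends₁ e).1 = g u then (1:ℝ) else 0) -
      (if g (ends₁ e).2 = g u then 1 else 0)) = netflow ends₁ θ u := by
  unfold netflow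
  refine Finset.sum_congr rfl fun e _ => ?_
  simp [hg.eq_iff]

lemma sum_push_zero {E₁ V₁ V₂ : Type*} [Fintype E₁] [DecidableEq V₂]
    (ends₁ : E₁ → V₁ × V₁) (g : V₁ → V₂) (θ : E₁ → ℝ) {v : V₂}
    (hv : ∀ u, g u ≠ v) :
    ∑ e, θ e * ((if g (ends₁ e).1 = v then (1:ℝ) else 0) -
      (if g (ends₁ e).2 = v then 1 else 0)) = 0 := by
  refine Finset.sum_eq_zero fun e _ => ?_
  simp [hv _]

lemma FB_transfer {φ : Formula N} {ψ : Formula M}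
    (eL : φ.Leaves ≃ ψ.Leaves) (eI : φ.Inner ≃ ψ.Inner)
    (hends : ∀ l, ψ.ends (eL l) =
      (Sum.map eI id (φ.ends l).1, Sum.map eI id (φ.ends l).2))
    {S : Set φ.Leaves} {S' : Set ψ.Leaves} (hS : ∀ l, eL l ∈ S' ↔ l ∈ S)
    {r : ℝ} (h : FB φ S r) : FB ψ S' r := by
  obtain ⟨θ, h1, h2, h3⟩ := h
  set g : φ.Vert → ψ.Vert := Sum.map eI id with hgdef
  have hg : Function.Injective g := by
    rintro (a | b) (a' | b') hab <;>
      simp only [hgdef, Sum.map, Sum.inl.injEq, Sum.inr.injEq, id] at hab <;>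
      simp_all [eI.injective.eq_iff]
  refine ⟨θ ∘ eL.symm, ?_, ?_, ?_⟩
  · intro v
    obtain ⟨u, rfl⟩ : ∃ u, g u = v :=
      ⟨Sum.map eI.symm id v, by rcases v with a | b <;> simp [hgdef]⟩
    have key : netflow ψ.ends (θ ∘ eL.symm) (g u) = netflow φ.ends θ u := by
      rw [← sum_push φ.ends g hg θ u]
      unfold netflow
      rw [← Equiv.sum_comp eL (fun e => (θ ∘ eL.symm) e *
        ((if (ψ.ends e).1 = g u then (1:ℝ) else 0) -
          (if (ψ.ends e).2 = g u then 1 else 0)))]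
      refine Finset.sum_congr rfl fun l _ => ?_
      rw [hends l]
      simp
    rw [key, h1 u]
    have hsrc : (g u = ψ.src) ↔ (u = φ.src) := by
      constructor
      · intro hh
        apply hg
        rw [hh]; rfl
      · rintro rfl; rfl
    have hsnk : (g u = ψ.snk) ↔ (u = φ.snk) := by
      constructor
      · intro hh
        apply hg
        rw [hh]; rfl
      · rintro rfl; rfl
    simp only [hsrc, hsnk]
  · intro l' hl'
    have := h2 (eL.symm l')
    simp only [Function.comp_apply]
    refine this ?_
    intro hmem
    exact hl' (by simpa using (hS (eL.symm l')).2 hmem)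
  · rw [energy_one] at h3 ⊢
    rw [← Equiv.sum_comp eL (fun e => (θ ∘ eL.symm) e ^ 2)]
    simpa using h3

end STConn
namespace STConn
open Formula
variable {N M : ℕ}

lemma dualF_relabel (f : Fin N → Fin M) : ∀ φ : Formula N,
    dualF (φ.relabel f) = (dualF φ).relabel f := by
  intro φ
  induction φ with
  | var i => rfl
  | and k fs ih =>
      show Formula.or k _ = Formula.or k _
      congr 1; funext i; exact ih i
  | or k fs ih =>
      show Formula.and k _ = Formula.and k _
      congr 1; funext i; exact ih i

lemma eval_relabel (f : Fin N → Fin M) : ∀ (φ : Formula N) (x : Fin M → Bool),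
    (φ.relabel f).eval x = φ.eval (x ∘ f) := by
  intro φ
  induction φ with
  | var i => intro x; rfl
  | and k fs ih =>
      intro x
      show (List.finRange _).all _ = (List.finRange _).all _
      congr 1; funext i; exact ih i x
  | or k fs ih =>
      intro x
      show (List.finRange _).any _ = (List.finRange _).any _
      congr 1; funext i; exact ih i x

lemma eval_and_two (fs : Fin 2 → Formula N) (x : Fin N → Bool) :
    (Formula.and 1 fs).eval x = ((fs 0).eval x && (fs 1).eval x) := by
  show (List.finRange 2).all _ = _
  rw [show List.finRange 2 = [0, 1] from rfl]
  simp [List.all]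

lemma eval_or_two (fs : Fin 2 → Formula N) (x : Fin N → Bool) :
    (Formula.or 1 fs).eval x = ((fs 0).eval x || (fs 1).eval x) := by
  show (List.finRange 2).any _ = _
  rw [show List.finRange 2 = [0, 1] from rfl]
  simp [List.any]

lemma relabel_iso (f : Fin N → Fin M) : ∀ (φ : Formula N),
    ∃ (eL : φ.Leaves ≃ (φ.relabel f).Leaves) (eI : φ.Inner ≃ (φ.relabel f).Inner),
      (∀ l, (φ.relabel f).label (eL l) = f (φ.label l)) ∧
      (∀ l, (φ.relabel f).ends (eL l) =
        (Sum.map eI id (φ.ends l).1, Sum.map eI id (φ.ends l).2)) := by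
  intro φ
  induction φ with
  | var i =>
      exact ⟨Equiv.refl _, Equiv.refl _, fun l => rfl, fun l => rfl⟩
  | and k fs ih =>
      choose eL eI hlab hend using ih
      refine ⟨Equiv.sigmaCongrRight eL,
        Equiv.sumCongr (Equiv.sigmaCongrRight eI) (Equiv.refl (Fin k)), ?_, ?_⟩
      · rintro ⟨i, l⟩
        exact hlab i l
      · rintro ⟨i, l⟩
        show (vmapAnd k (fun j => (fs j).relabel f) i
                (((fs i).relabel f).ends (eL i l)).1,
              vmapAnd k (fun j => (fs j).relabel f) i
                (((fs i).relabel f).ends (eL i l)).2) =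
          (Sum.map (Equiv.sumCongr (Equiv.sigmaCongrRight eI) (Equiv.refl (Fin k))) id
              (vmapAnd k fs i ((fs i).ends l).1),
           Sum.map (Equiv.sumCongr (Equiv.sigmaCongrRight eI) (Equiv.refl (Fin k))) id
              (vmapAnd k fs i ((fs i).ends l).2))
        rw [hend i l]
        have key : ∀ u : (fs i).Vert,
            vmapAnd k (fun j => (fs j).relabel f) i (Sum.map (eI i) id u) =
            Sum.map (Equiv.sumCongr (Equiv.sigmaCongrRight eI) (Equiv.refl (Fin k))) id
              (vmapAnd k fs i u) := by
          rintro (w | b)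
          · rfl
          · cases b <;> simp only [Sum.map, vmapAnd, id] <;> split_ifs <;> rfl
        simp [key]
        rfl
  | or k fs ih =>
      choose eL eI hlab hend using ih
      refine ⟨Equiv.sigmaCongrRight eL, Equiv.sigmaCongrRight eI, ?_, ?_⟩
      · rintro ⟨i, l⟩
        exact hlab i l
      · rintro ⟨i, l⟩
        show (vmapOr k (fun j => (fs j).relabel f) i
                (((fs i).relabel f).ends (eL i l)).1,
              vmapOr k (fun j => (fs j).relabel f) i
                (((fs i).relabel f).ends (eL i l)).2) =
          (Sum.map (Equiv.sigmaCongrRight eI) id (vmapOr k fs i ((fs i).ends l).1),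
           Sum.map (Equiv.sigmaCongrRight eI) id (vmapOr k fs i ((fs i).ends l).2))
        rw [hend i l]
        have key : ∀ u : (fs i).Vert,
            vmapOr k (fun j => (fs j).relabel f) i (Sum.map (eI i) id u) =
            Sum.map (Equiv.sigmaCongrRight eI) id (vmapOr k fs i u) := by
          rintro (w | b) <;> rfl
        simp [key]
        rfl

end STConn
namespace STConn
open Formula
variable {N : ℕ}

lemma sum_sigma_two {L : Fin 2 → Type*} [∀ i, Fintype (L i)] [inst : Fintype (Σ i, L i)]
    (F : (Σ i, L i) → ℝ) :
    ∑ e, F e = (∑ l, F ⟨0, l⟩) + ∑ l, F ⟨1, l⟩ := by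
  rw [Subsingleton.elim inst (Sigma.instFintype)]
  rw [← Finset.univ_sigma_univ, Finset.sum_sigma, Fin.sum_univ_two]

@[simp] lemma vmapAnd_zero_inl (fs : Fin 2 → Formula N) (w : (fs 0).Inner) :
    vmapAnd 1 fs 0 (Sum.inl w) = Sum.inl (Sum.inl ⟨0, w⟩) := rfl
@[simp] lemma vmapAnd_zero_true (fs : Fin 2 → Formula N) :
    vmapAnd 1 fs 0 (Sum.inr true) = Sum.inr true := rfl
@[simp] lemma vmapAnd_zero_false (fs : Fin 2 → Formula N) :
    vmapAnd 1 fs 0 (Sum.inr false) = Sum.inl (Sum.inr ⟨0, Nat.one_pos⟩) := rfl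
@[simp] lemma vmapAnd_one_inl (fs : Fin 2 → Formula N) (w : (fs 1).Inner) :
    vmapAnd 1 fs 1 (Sum.inl w) = Sum.inl (Sum.inl ⟨1, w⟩) := rfl
@[simp] lemma vmapAnd_one_true (fs : Fin 2 → Formula N) :
    vmapAnd 1 fs 1 (Sum.inr true) = Sum.inl (Sum.inr ⟨0, Nat.one_pos⟩) := rfl
@[simp] lemma vmapAnd_one_false (fs : Fin 2 → Formula N) :
    vmapAnd 1 fs 1 (Sum.inr false) = Sum.inr false := rfl
@[simp] lemma vmapOr_apply_inl {k : ℕ} (fs : Fin (k+1) → Formula N) (i : Fin (k+1))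
    (w : (fs i).Inner) : vmapOr k fs i (Sum.inl w) = Sum.inl ⟨i, w⟩ := rfl
@[simp] lemma vmapOr_apply_inr {k : ℕ} (fs : Fin (k+1) → Formula N) (i : Fin (k+1))
    (b : Bool) : vmapOr k fs i (Sum.inr b) = Sum.inr b := rfl

lemma vmapAnd_zero_inj (fs : Fin 2 → Formula N) :
    Function.Injective (vmapAnd 1 fs 0) := by
  rintro (w | (b | b)) (w' | (b' | b')) h <;> simp_all [Fin.ext_iff] <;> cases h <;> rfl

lemma vmapAnd_one_inj (fs : Fin 2 → Formula N) :
    Function.Injective (vmapAnd 1 fs 1) := by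
  rintro (w | (b | b)) (w' | (b' | b')) h <;> simp_all [Fin.ext_iff] <;> cases h <;> rfl

lemma vmapOr_inj {k : ℕ} (fs : Fin (k+1) → Formula N) (i : Fin (k+1)) :
    Function.Injective (vmapOr k fs i) := by
  rintro (w | b) (w' | b') h
  · rw [vmapOr_apply_inl, vmapOr_apply_inl] at h
    cases h
    rfl
  · simp_all
  · simp_all
  · simp_all

lemma FB_and (fs : Fin 2 → Formula N)
    (S : Set (Formula.and 1 fs).Leaves) (Si : ∀ i, Set (fs i).Leaves)
    (hS : ∀ (i : Fin 2) (l : (fs i).Leaves),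
      (show (Formula.and 1 fs).Leaves from ⟨i, l⟩) ∈ S ↔ l ∈ Si i)
    (r : Fin 2 → ℝ) (h : ∀ i, FB (fs i) (Si i) (r i)) :
    FB (Formula.and 1 fs) S (r 0 + r 1) := by
  obtain ⟨θ, hθ⟩ : ∃ θ : ∀ i, (fs i).Leaves → ℝ, ∀ i,
      IsUnitFlow (fs i).ends (fs i).src (fs i).snk (θ i) ∧
      (∀ l ∉ Si i, θ i l = 0) ∧ energy (fun _ => (1:ℝ)) (θ i) ≤ r i :=
    ⟨fun i => (h i).choose, fun i => (h i).choose_spec⟩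
  refine ⟨fun e => θ e.1 e.2, ?_, ?_, ?_⟩
  · intro v
    have expand : netflow (Formula.and 1 fs).ends (fun e => θ e.1 e.2) v =
        (∑ l, θ 0 l * ((if vmapAnd 1 fs 0 ((fs 0).ends l).1 = v then (1:ℝ) else 0) -
          (if vmapAnd 1 fs 0 ((fs 0).ends l).2 = v then 1 else 0))) +
        (∑ l, θ 1 l * ((if vmapAnd 1 fs 1 ((fs 1).ends l).1 = v then (1:ℝ) else 0) -
          (if vmapAnd 1 fs 1 ((fs 1).ends l).2 = v then 1 else 0))) := by
      unfold netflow
      exact sum_sigma_two _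
    rw [expand]
    rcases v with ((⟨j, w⟩ | j) | b)
    · -- inner vertex of subgraph j
      rcases j with ⟨jv, hj⟩
      interval_cases jv
      · have e0 : (∑ l, θ 0 l * ((if vmapAnd 1 fs 0 ((fs 0).ends l).1 =
            (Sum.inl (Sum.inl ⟨⟨0, hj⟩, w⟩) : (Formula.and 1 fs).Vert) then (1:ℝ) else 0) -
            (if vmapAnd 1 fs 0 ((fs 0).ends l).2 =
              (Sum.inl (Sum.inl ⟨⟨0, hj⟩, w⟩) : (Formula.and 1 fs).Vert) then 1 else 0))) =
            netflow (fs 0).ends (θ 0) (Sum.inl w) :=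
          sum_push (fs 0).ends (vmapAnd 1 fs 0) (vmapAnd_zero_inj fs) (θ 0) (Sum.inl w)
        have e1 : (∑ l, θ 1 l * ((if vmapAnd 1 fs 1 ((fs 1).ends l).1 =
            (Sum.inl (Sum.inl ⟨⟨0, hj⟩, w⟩) : (Formula.and 1 fs).Vert) then (1:ℝ) else 0) -
            (if vmapAnd 1 fs 1 ((fs 1).ends l).2 =
              (Sum.inl (Sum.inl ⟨⟨0, hj⟩, w⟩) : (Formula.and 1 fs).Vert) then 1 else 0))) = 0 := by
          refine sum_push_zero (fs 1).ends (vmapAnd 1 fs 1) (θ 1) ?_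
          rintro (w' | (b' | b')) hu <;> simp_all [Fin.ext_iff] <;> cases hu
        rw [e0, e1, (hθ 0).1 (Sum.inl w)]
        simp [Formula.src, Formula.snk]
      · have e0 : (∑ l, θ 0 l * ((if vmapAnd 1 fs 0 ((fs 0).ends l).1 =
            (Sum.inl (Sum.inl ⟨⟨1, hj⟩, w⟩) : (Formula.and 1 fs).Vert) then (1:ℝ) else 0) -
            (if vmapAnd 1 fs 0 ((fs 0).ends l).2 =
              (Sum.inl (Sum.inl ⟨⟨1, hj⟩, w⟩) : (Formula.and 1 fs).Vert) then 1 else 0))) = 0 := by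
          refine sum_push_zero (fs 0).ends (vmapAnd 1 fs 0) (θ 0) ?_
          rintro (w' | (b' | b')) hu <;> simp_all [Fin.ext_iff] <;> cases hu
        have e1 : (∑ l, θ 1 l * ((if vmapAnd 1 fs 1 ((fs 1).ends l).1 =
            (Sum.inl (Sum.inl ⟨⟨1, hj⟩, w⟩) : (Formula.and 1 fs).Vert) then (1:ℝ) else 0) -
            (if vmapAnd 1 fs 1 ((fs 1).ends l).2 =
              (Sum.inl (Sum.inl ⟨⟨1, hj⟩, w⟩) : (Formula.and 1 fs).Vert) then 1 else 0))) =
            netflow (fs 1).ends (θ 1) (Sum.inl w) :=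
          sum_push (fs 1).ends (vmapAnd 1 fs 1) (vmapAnd_one_inj fs) (θ 1) (Sum.inl w)
        rw [e0, e1, (hθ 1).1 (Sum.inl w)]
        simp [Formula.src, Formula.snk]
    · -- junction vertex
      have hj : j = ⟨0, Nat.one_pos⟩ := Subsingleton.elim _ _
      subst hj
      have e0 : (∑ l, θ 0 l * ((if vmapAnd 1 fs 0 ((fs 0).ends l).1 =
          (Sum.inl (Sum.inr ⟨0, Nat.one_pos⟩) : (Formula.and 1 fs).Vert) then (1:ℝ) else 0) -
          (if vmapAnd 1 fs 0 ((fs 0).ends l).2 =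
            (Sum.inl (Sum.inr ⟨0, Nat.one_pos⟩) : (Formula.and 1 fs).Vert) then 1 else 0))) =
          netflow (fs 0).ends (θ 0) (Sum.inr false) :=
        sum_push (fs 0).ends (vmapAnd 1 fs 0) (vmapAnd_zero_inj fs) (θ 0) (Sum.inr false)
      have e1 : (∑ l, θ 1 l * ((if vmapAnd 1 fs 1 ((fs 1).ends l).1 =
          (Sum.inl (Sum.inr ⟨0, Nat.one_pos⟩) : (Formula.and 1 fs).Vert) then (1:ℝ) else 0) -
          (if vmapAnd 1 fs 1 ((fs 1).ends l).2 =
            (Sum.inl (Sum.inr ⟨0, Nat.one_pos⟩) : (Formula.and 1 fs).Vert) then 1 else 0))) =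
          netflow (fs 1).ends (θ 1) (Sum.inr true) :=
        sum_push (fs 1).ends (vmapAnd 1 fs 1) (vmapAnd_one_inj fs) (θ 1) (Sum.inr true)
      rw [e0, e1, (hθ 0).1 (Sum.inr false), (hθ 1).1 (Sum.inr true)]
      simp [Formula.src, Formula.snk]
    · -- terminal
      cases b
      · -- snk
        have e0 : (∑ l, θ 0 l * ((if vmapAnd 1 fs 0 ((fs 0).ends l).1 =
            (Sum.inr false : (Formula.and 1 fs).Vert) then (1:ℝ) else 0) -
            (if vmapAnd 1 fs 0 ((fs 0).ends l).2 =
              (Sum.inr false : (Formula.and 1 fs).Vert) then 1 else 0))) = 0 := by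
          refine sum_push_zero (fs 0).ends (vmapAnd 1 fs 0) (θ 0) ?_
          rintro (w' | (b' | b')) hu <;> simp_all [Fin.ext_iff]
        have e1 : (∑ l, θ 1 l * ((if vmapAnd 1 fs 1 ((fs 1).ends l).1 =
            (Sum.inr false : (Formula.and 1 fs).Vert) then (1:ℝ) else 0) -
            (if vmapAnd 1 fs 1 ((fs 1).ends l).2 =
              (Sum.inr false : (Formula.and 1 fs).Vert) then 1 else 0))) =
            netflow (fs 1).ends (θ 1) (Sum.inr false) :=
          sum_push (fs 1).ends (vmapAnd 1 fs 1) (vmapAnd_one_inj fs) (θ 1) (Sum.inr false)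
        rw [e0, e1, (hθ 1).1 (Sum.inr false)]
        simp [Formula.src, Formula.snk]
      · -- src
        have e0 : (∑ l, θ 0 l * ((if vmapAnd 1 fs 0 ((fs 0).ends l).1 =
            (Sum.inr true : (Formula.and 1 fs).Vert) then (1:ℝ) else 0) -
            (if vmapAnd 1 fs 0 ((fs 0).ends l).2 =
              (Sum.inr true : (Formula.and 1 fs).Vert) then 1 else 0))) =
            netflow (fs 0).ends (θ 0) (Sum.inr true) :=
          sum_push (fs 0).ends (vmapAnd 1 fs 0) (vmapAnd_zero_inj fs) (θ 0) (Sum.inr true)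
        have e1 : (∑ l, θ 1 l * ((if vmapAnd 1 fs 1 ((fs 1).ends l).1 =
            (Sum.inr true : (Formula.and 1 fs).Vert) then (1:ℝ) else 0) -
            (if vmapAnd 1 fs 1 ((fs 1).ends l).2 =
              (Sum.inr true : (Formula.and 1 fs).Vert) then 1 else 0))) = 0 := by
          refine sum_push_zero (fs 1).ends (vmapAnd 1 fs 1) (θ 1) ?_
          rintro (w' | (b' | b')) hu <;> simp_all [Fin.ext_iff]
        rw [e0, e1, (hθ 0).1 (Sum.inr true)]
        simp [Formula.src, Formula.snk]
  · rintro ⟨i, l⟩ hl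
    exact (hθ i).2.1 l (fun hmem => hl ((hS i l).2 hmem))
  · rw [energy_one]
    have : (∑ e : (Formula.and 1 fs).Leaves, (θ e.1 e.2) ^ 2) =
        (∑ l, (θ 0 l) ^ 2) + ∑ l, (θ 1 l) ^ 2 := sum_sigma_two _
    rw [this]
    have h0 := (hθ 0).2.2
    have h1 := (hθ 1).2.2
    rw [energy_one] at h0 h1
    exact add_le_add h0 h1

end STConn
namespace STConn
open Formula
variable {N : ℕ}

lemma FB_or (fs : Fin 2 → Formula N)
    (S : Set (Formula.or 1 fs).Leaves) (Si : ∀ i, Set (fs i).Leaves)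
    (hS : ∀ (i : Fin 2) (l : (fs i).Leaves),
      (show (Formula.or 1 fs).Leaves from ⟨i, l⟩) ∈ S ↔ l ∈ Si i)
    (c : Fin 2 → ℝ) (hc : c 0 + c 1 = 1) (r : Fin 2 → ℝ)
    (h : ∀ i, c i ≠ 0 → FB (fs i) (Si i) (r i)) :
    FB (Formula.or 1 fs) S (c 0 ^ 2 * r 0 + c 1 ^ 2 * r 1) := by
  obtain ⟨θ, hθ⟩ : ∃ θ : ∀ i, (fs i).Leaves → ℝ, ∀ i,
      (∀ l ∉ Si i, c i * θ i l = 0) ∧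
      (c i ≠ 0 → IsUnitFlow (fs i).ends (fs i).src (fs i).snk (θ i) ∧
        energy (fun _ => (1:ℝ)) (θ i) ≤ r i) := by
    have key : ∀ i, ∃ θi : (fs i).Leaves → ℝ,
        (∀ l ∉ Si i, c i * θi l = 0) ∧
        (c i ≠ 0 → IsUnitFlow (fs i).ends (fs i).src (fs i).snk θi ∧
          energy (fun _ => (1:ℝ)) θi ≤ r i) := by
      intro i
      by_cases hci : c i = 0
      · exact ⟨fun _ => 0, fun _ _ => by rw [hci]; ring, fun hne => absurd hci hne⟩
      · obtain ⟨θi, u1, u2, u3⟩ := h i hci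
        exact ⟨θi, fun l hl => by rw [u2 l hl]; ring, fun _ => ⟨u1, u3⟩⟩
    exact ⟨fun i => (key i).choose, fun i => (key i).choose_spec⟩
  have hflow : ∀ (i : Fin 2) (u : (fs i).Vert),
      c i * netflow (fs i).ends (θ i) u =
      c i * ((if u = (fs i).src then (1:ℝ) else 0) - (if u = (fs i).snk then 1 else 0)) := by
    intro i u
    by_cases hci : c i = 0
    · rw [hci]; ring
    · rw [((hθ i).2 hci).1 u]
  have factor : ∀ (i : Fin 2) (X : (fs i).Leaves → ℝ),
      (∑ l, (c i * θ i l) * X l) = c i * ∑ l, θ i l * X l := by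
    intro i X
    rw [Finset.mul_sum]
    exact Finset.sum_congr rfl fun l _ => by ring
  refine ⟨fun e => c e.1 * θ e.1 e.2, ?_, ?_, ?_⟩
  · intro v
    have expand : netflow (Formula.or 1 fs).ends (fun e => c e.1 * θ e.1 e.2) v =
        (∑ l, (c 0 * θ 0 l) * ((if vmapOr 1 fs 0 ((fs 0).ends l).1 = v then (1:ℝ) else 0) -
          (if vmapOr 1 fs 0 ((fs 0).ends l).2 = v then 1 else 0))) +
        (∑ l, (c 1 * θ 1 l) * ((if vmapOr 1 fs 1 ((fs 1).ends l).1 = v then (1:ℝ) else 0) -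
          (if vmapOr 1 fs 1 ((fs 1).ends l).2 = v then 1 else 0))) := by
      unfold netflow
      exact sum_sigma_two _
    rw [expand, factor 0, factor 1]
    rcases v with (⟨j, w⟩ | b)
    · rcases j with ⟨jv, hj⟩
      interval_cases jv
      · have e0 : (∑ l, θ 0 l * ((if vmapOr 1 fs 0 ((fs 0).ends l).1 =
            (Sum.inl ⟨⟨0, hj⟩, w⟩ : (Formula.or 1 fs).Vert) then (1:ℝ) else 0) -
            (if vmapOr 1 fs 0 ((fs 0).ends l).2 =
              (Sum.inl ⟨⟨0, hj⟩, w⟩ : (Formula.or 1 fs).Vert) then 1 else 0))) =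
            netflow (fs 0).ends (θ 0) (Sum.inl w) :=
          sum_push (fs 0).ends (vmapOr 1 fs 0) (vmapOr_inj fs 0) (θ 0) (Sum.inl w)
        have e1 : (∑ l, θ 1 l * ((if vmapOr 1 fs 1 ((fs 1).ends l).1 =
            (Sum.inl ⟨⟨0, hj⟩, w⟩ : (Formula.or 1 fs).Vert) then (1:ℝ) else 0) -
            (if vmapOr 1 fs 1 ((fs 1).ends l).2 =
              (Sum.inl ⟨⟨0, hj⟩, w⟩ : (Formula.or 1 fs).Vert) then 1 else 0))) = 0 := by
          refine sum_push_zero (fs 1).ends (vmapOr 1 fs 1) (θ 1) ?_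
          rintro (w' | b') hu
          · simp only [vmapOr_apply_inl, Sum.inl.injEq] at hu
            have := congrArg Fin.val (Sigma.mk.inj_iff.mp (Sum.inl.inj hu)).1
            simp at this
          · simp at hu
        rw [e0, e1, hflow 0 (Sum.inl w)]
        simp [Formula.src, Formula.snk]
      · have e0 : (∑ l, θ 0 l * ((if vmapOr 1 fs 0 ((fs 0).ends l).1 =
            (Sum.inl ⟨⟨1, hj⟩, w⟩ : (Formula.or 1 fs).Vert) then (1:ℝ) else 0) -
            (if vmapOr 1 fs 0 ((fs 0).ends l).2 =
              (Sum.inl ⟨⟨1, hj⟩, w⟩ : (Formula.or 1 fs).Vert) then 1 else 0))) = 0 := by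
          refine sum_push_zero (fs 0).ends (vmapOr 1 fs 0) (θ 0) ?_
          rintro (w' | b') hu
          · simp only [vmapOr_apply_inl, Sum.inl.injEq] at hu
            have := congrArg Fin.val (Sigma.mk.inj_iff.mp (Sum.inl.inj hu)).1
            simp at this
          · simp at hu
        have e1 : (∑ l, θ 1 l * ((if vmapOr 1 fs 1 ((fs 1).ends l).1 =
            (Sum.inl ⟨⟨1, hj⟩, w⟩ : (Formula.or 1 fs).Vert) then (1:ℝ) else 0) -
            (if vmapOr 1 fs 1 ((fs 1).ends l).2 =
              (Sum.inl ⟨⟨1, hj⟩, w⟩ : (Formula.or 1 fs).Vert) then 1 else 0))) =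
            netflow (fs 1).ends (θ 1) (Sum.inl w) :=
          sum_push (fs 1).ends (vmapOr 1 fs 1) (vmapOr_inj fs 1) (θ 1) (Sum.inl w)
        rw [e0, e1, hflow 1 (Sum.inl w)]
        simp [Formula.src, Formula.snk]
    · have e0 : (∑ l, θ 0 l * ((if vmapOr 1 fs 0 ((fs 0).ends l).1 =
          (Sum.inr b : (Formula.or 1 fs).Vert) then (1:ℝ) else 0) -
          (if vmapOr 1 fs 0 ((fs 0).ends l).2 =
            (Sum.inr b : (Formula.or 1 fs).Vert) then 1 else 0))) =
          netflow (fs 0).ends (θ 0) (Sum.inr b) :=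
        sum_push (fs 0).ends (vmapOr 1 fs 0) (vmapOr_inj fs 0) (θ 0) (Sum.inr b)
      have e1 : (∑ l, θ 1 l * ((if vmapOr 1 fs 1 ((fs 1).ends l).1 =
          (Sum.inr b : (Formula.or 1 fs).Vert) then (1:ℝ) else 0) -
          (if vmapOr 1 fs 1 ((fs 1).ends l).2 =
            (Sum.inr b : (Formula.or 1 fs).Vert) then 1 else 0))) =
          netflow (fs 1).ends (θ 1) (Sum.inr b) :=
        sum_push (fs 1).ends (vmapOr 1 fs 1) (vmapOr_inj fs 1) (θ 1) (Sum.inr b)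
      rw [e0, e1, hflow 0 (Sum.inr b), hflow 1 (Sum.inr b)]
      cases b <;> simp [Formula.src, Formula.snk] <;> linarith [hc]
  · rintro ⟨i, l⟩ hl
    exact (hθ i).1 l (fun hmem => hl ((hS i l).2 hmem))
  · rw [energy_one]
    have expand : (∑ e : (Formula.or 1 fs).Leaves, (c e.1 * θ e.1 e.2) ^ 2) =
        (∑ l, (c 0 * θ 0 l) ^ 2) + ∑ l, (c 1 * θ 1 l) ^ 2 := sum_sigma_two _
    rw [expand]
    have side : ∀ i : Fin 2, (∑ l, (c i * θ i l) ^ 2) ≤ c i ^ 2 * r i := by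
      intro i
      by_cases hci : c i = 0
      · simp [hci]
      · have : (∑ l, (c i * θ i l) ^ 2) = c i ^ 2 * ∑ l, (θ i l) ^ 2 := by
          rw [Finset.mul_sum]
          exact Finset.sum_congr rfl fun l _ => by ring
        rw [this]
        have hE := ((hθ i).2 hci).2
        rw [energy_one] at hE
        exact mul_le_mul_of_nonneg_left hE (sq_nonneg _)
    exact add_le_add (side 0) (side 1)

end STConn
namespace STConn
open Formula
variable {N : ℕ}

lemma FB_var (v : Fin N) (S : Set (Formula.var v).Leaves) (hS : ∀ l, l ∈ S) :
    FB (Formula.var v) S 1 := by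
  refine ⟨fun _ => 1, ?_, fun l hl => absurd (hS l) hl, ?_⟩
  · intro w
    have huniv : (Finset.univ : Finset (Formula.var v).Leaves) = {(show (Formula.var v).Leaves from ())} := rfl
    unfold netflow
    rw [huniv, Finset.sum_singleton]
    rcases w with (e | b)
    · exact e.elim
    · cases b <;> simp [Formula.src, Formula.snk, Formula.ends]
  · rw [energy_one]
    have huniv : (Finset.univ : Finset (Formula.var v).Leaves) = {(show (Formula.var v).Leaves from ())} := rfl
    rw [huniv, Finset.sum_singleton]
    norm_num

lemma nandTree_succ_odd {d : ℕ} (h : (d + 1) % 2 = 1) :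
    nandTree (d + 1) = Formula.and 1 (fun i => (nandTree d).relabel (embed d i)) := by
  rw [nandTree, if_pos h]

lemma nandTree_succ_even {d : ℕ} (h : (d + 1) % 2 = 0) :
    nandTree (d + 1) = Formula.or 1 (fun i => (nandTree d).relabel (embed d i)) := by
  rw [nandTree, if_neg (by omega)]

end STConn
namespace STConn
open Formula

lemma two_pow_le_max_left (m0 m1 : ℕ) : (2:ℝ) ^ m0 ≤ 2 ^ (max m0 m1) :=
  pow_le_pow_right₀ one_le_two (le_max_left _ _)

lemma two_pow_le_max_right (m0 m1 : ℕ) : (2:ℝ) ^ m1 ≤ 2 ^ (max m0 m1) :=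
  pow_le_pow_right₀ one_le_two (le_max_right _ _)

lemma main_lemma (d : ℕ) : ∀ x : Fin (2 ^ d) → Bool,
    ((nandTree d).eval x = true →
      FB (nandTree d) {l | x ((nandTree d).label l) = true}
        ((2:ℝ) ^ maxFaultA d x * (if d % 2 = 1 then 2 else 1))) ∧
    ((nandTree d).eval x = false →
      FB (dualF (nandTree d)) {l | x ((dualF (nandTree d)).label l) = false}
        ((2:ℝ) ^ maxFaultB d x * (if d % 2 = 1 then (1/2 : ℝ) else 1))) := by
  induction d with
  | zero =>
      intro x
      constructor
      · intro hx
        refine FB_mono (FB_var ⟨0, Nat.one_pos⟩ _ (fun l => hx)) ?_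
        norm_num [maxFaultA]
      · intro hx
        refine FB_mono (FB_var ⟨0, Nat.one_pos⟩ _ (fun l => hx)) ?_
        norm_num [maxFaultB]
  | succ d ih =>
      intro x
      have hev : ∀ i : Fin 2,
          ((nandTree d).relabel (embed d i)).eval x = (nandTree d).eval (half d i x) :=
        fun i => eval_relabel (embed d i) (nandTree d) x
      have transferA : ∀ i : Fin 2, (nandTree d).eval (half d i x) = true →
          FB ((nandTree d).relabel (embed d i))
            {l | x (((nandTree d).relabel (embed d i)).label l) = true}
            ((2:ℝ) ^ maxFaultA d (half d i x) * (if d % 2 = 1 then 2 else 1)) := by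
        intro i hi
        obtain ⟨eL, eI, hlab, hend⟩ := relabel_iso (embed d i) (nandTree d)
        refine FB_transfer eL eI hend ?_ ((ih (half d i x)).1 hi)
        intro l
        show x (((nandTree d).relabel (embed d i)).label (eL l)) = true ↔
          half d i x ((nandTree d).label l) = true
        rw [hlab l]
        exact Iff.rfl
      have transferB : ∀ i : Fin 2, (nandTree d).eval (half d i x) = false →
          FB ((dualF (nandTree d)).relabel (embed d i))
            {l | x (((dualF (nandTree d)).relabel (embed d i)).label l) = false}
            ((2:ℝ) ^ maxFaultB d (half d i x) * (if d % 2 = 1 then (1/2:ℝ) else 1)) := by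
        intro i hi
        obtain ⟨eL, eI, hlab, hend⟩ := relabel_iso (embed d i) (dualF (nandTree d))
        refine FB_transfer eL eI hend ?_ ((ih (half d i x)).2 hi)
        intro l
        show x (((dualF (nandTree d)).relabel (embed d i)).label (eL l)) = false ↔
          half d i x ((dualF (nandTree d)).label l) = false
        rw [hlab l]
        exact Iff.rfl
      rcases Nat.mod_two_eq_zero_or_one d with hd | hd
      · -- d even, d+1 odd : root is ∧
        have hd1 : (d + 1) % 2 = 1 := by omega
        have hform := nandTree_succ_odd hd1
        have hdual : dualF (nandTree (d + 1)) =
            Formula.or 1 (fun i => (dualF (nandTree d)).relabel (embed d i)) := by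
          rw [hform]
          show Formula.or 1 (fun i => dualF ((nandTree d).relabel (embed d i))) = _
          congr 1
          funext i
          exact dualF_relabel (embed d i) (nandTree d)
        constructor
        · -- primal: series
          intro hx
          rw [hform, eval_and_two, hev 0, hev 1, Bool.and_eq_true] at hx
          have hboth : ∀ i : Fin 2, (nandTree d).eval (half d i x) = true := by
            intro i; fin_cases i
            · exact hx.1
            · exact hx.2
          have hA : ∀ i : Fin 2, FB ((nandTree d).relabel (embed d i))
              {l | x (((nandTree d).relabel (embed d i)).label l) = true}
              ((2:ℝ) ^ maxFaultA d (half d i x)) := by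
            intro i
            have := transferA i (hboth i)
            rwa [if_neg (by omega), mul_one] at this
          rw [hform]
          refine FB_mono (FB_and (fun i => (nandTree d).relabel (embed d i)) _
            (fun i => {l | x (((nandTree d).relabel (embed d i)).label l) = true})
            (fun i l => Iff.rfl)
            (fun i => (2:ℝ) ^ maxFaultA d (half d i x)) hA) ?_
          have hm : maxFaultA (d + 1) x =
              max (maxFaultA d (half d 0 x)) (maxFaultA d (half d 1 x)) := by
            simp only [maxFaultA]
            rw [if_pos hd1]
          rw [hm, if_pos hd1]
          have b0 := two_pow_le_max_left (maxFaultA d (half d 0 x)) (maxFaultA d (half d 1 x))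
          have b1 := two_pow_le_max_right (maxFaultA d (half d 0 x)) (maxFaultA d (half d 1 x))
          linarith
        · -- dual: parallel
          intro hx
          rw [hform, eval_and_two, hev 0, hev 1] at hx
          have hB : ∀ i : Fin 2, (nandTree d).eval (half d i x) = false →
              FB ((dualF (nandTree d)).relabel (embed d i))
                {l | x (((dualF (nandTree d)).relabel (embed d i)).label l) = false}
                ((2:ℝ) ^ maxFaultB d (half d i x)) := by
            intro i hi
            have := transferB i hi
            rwa [if_neg (by omega), mul_one] at this
          rw [hdual]
          cases hL : (nandTree d).eval (half d 0 x) <;>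
            cases hR : (nandTree d).eval (half d 1 x) <;>
            rw [hL, hR] at hx
          · -- both false : split flow
            refine FB_mono (FB_or (fun i => (dualF (nandTree d)).relabel (embed d i)) _
              (fun i => {l | x (((dualF (nandTree d)).relabel (embed d i)).label l) = false})
              (fun i l => Iff.rfl) (fun _ => (1/2 : ℝ)) (by norm_num)
              (fun i => (2:ℝ) ^ maxFaultB d (half d i x))
              (fun i _ => hB i (by fin_cases i <;> assumption))) ?_
            have hm : maxFaultB (d + 1) x =
                max (maxFaultB d (half d 0 x)) (maxFaultB d (half d 1 x)) := by
              simp [maxFaultB, hd1, hL, hR]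
            rw [hm, if_pos hd1]
            have b0 := two_pow_le_max_left (maxFaultB d (half d 0 x)) (maxFaultB d (half d 1 x))
            have b1 := two_pow_le_max_right (maxFaultB d (half d 0 x)) (maxFaultB d (half d 1 x))
            have hp0 : (0:ℝ) < 2 ^ (max (maxFaultB d (half d 0 x)) (maxFaultB d (half d 1 x))) :=
              pow_pos two_pos _
            nlinarith
          · -- left false only
            refine FB_mono (FB_or (fun i => (dualF (nandTree d)).relabel (embed d i)) _
              (fun i => {l | x (((dualF (nandTree d)).relabel (embed d i)).label l) = false})
              (fun i l => Iff.rfl) (fun i => if i = 0 then (1:ℝ) else 0) (by norm_num)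
              (fun i => if i = 0 then (2:ℝ) ^ maxFaultB d (half d 0 x) else 0) ?_) ?_
            · intro i hci
              fin_cases i
              · simpa using hB 0 hL
              · simp at hci
            · have hm : maxFaultB (d + 1) x = 1 + maxFaultB d (half d 0 x) := by
                simp [maxFaultB, hd1, hL, hR]
              rw [hm, if_pos hd1]
              simp [pow_add]
              ring_nf
              exact le_refl _
          · -- right false only
            refine FB_mono (FB_or (fun i => (dualF (nandTree d)).relabel (embed d i)) _
              (fun i => {l | x (((dualF (nandTree d)).relabel (embed d i)).label l) = false})
              (fun i l => Iff.rfl) (fun i => if i = 0 then (0:ℝ) else 1) (by norm_num)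
              (fun i => if i = 0 then 0 else (2:ℝ) ^ maxFaultB d (half d 1 x)) ?_) ?_
            · intro i hci
              fin_cases i
              · simp at hci
              · simpa using hB 1 hR
            · have hm : maxFaultB (d + 1) x = 1 + maxFaultB d (half d 1 x) := by
                simp [maxFaultB, hd1, hL, hR]
              rw [hm, if_pos hd1]
              simp [pow_add]
              ring_nf
              exact le_refl _
          · simp at hx
      · -- d odd, d+1 even : root is ∨
        have hd1 : (d + 1) % 2 = 0 := by omega
        have hd1' : ¬ (d + 1) % 2 = 1 := by omega
        have hform := nandTree_succ_even hd1
        have hdual : dualF (nandTree (d + 1)) =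
            Formula.and 1 (fun i => (dualF (nandTree d)).relabel (embed d i)) := by
          rw [hform]
          show Formula.and 1 (fun i => dualF ((nandTree d).relabel (embed d i))) = _
          congr 1
          funext i
          exact dualF_relabel (embed d i) (nandTree d)
        constructor
        · -- primal: parallel
          intro hx
          rw [hform, eval_or_two, hev 0, hev 1] at hx
          have hA : ∀ i : Fin 2, (nandTree d).eval (half d i x) = true →
              FB ((nandTree d).relabel (embed d i))
                {l | x (((nandTree d).relabel (embed d i)).label l) = true}
                ((2:ℝ) ^ maxFaultA d (half d i x) * 2) := by
            intro i hi
            have := transferA i hi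
            rwa [if_pos hd] at this
          rw [hform]
          cases hL : (nandTree d).eval (half d 0 x) <;>
            cases hR : (nandTree d).eval (half d 1 x) <;>
            rw [hL, hR] at hx
          · simp at hx
          · -- right true only
            refine FB_mono (FB_or (fun i => (nandTree d).relabel (embed d i)) _
              (fun i => {l | x (((nandTree d).relabel (embed d i)).label l) = true})
              (fun i l => Iff.rfl) (fun i => if i = 0 then (0:ℝ) else 1) (by norm_num)
              (fun i => if i = 0 then 0 else (2:ℝ) ^ maxFaultA d (half d 1 x) * 2) ?_) ?_
            · intro i hci
              fin_cases i
              · simp at hci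
              · simpa using hA 1 hR
            · have hm : maxFaultA (d + 1) x = 1 + maxFaultA d (half d 1 x) := by
                simp [maxFaultA, hd1', hL, hR]
              rw [hm, if_neg hd1']
              simp [pow_add]
              ring_nf
              exact le_refl _
          · -- left true only
            refine FB_mono (FB_or (fun i => (nandTree d).relabel (embed d i)) _
              (fun i => {l | x (((nandTree d).relabel (embed d i)).label l) = true})
              (fun i l => Iff.rfl) (fun i => if i = 0 then (1:ℝ) else 0) (by norm_num)
              (fun i => if i = 0 then (2:ℝ) ^ maxFaultA d (half d 0 x) * 2 else 0) ?_) ?_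
            · intro i hci
              fin_cases i
              · simpa using hA 0 hL
              · simp at hci
            · have hm : maxFaultA (d + 1) x = 1 + maxFaultA d (half d 0 x) := by
                simp [maxFaultA, hd1', hL, hR]
              rw [hm, if_neg hd1']
              simp [pow_add]
              ring_nf
              exact le_refl _
          · -- both true : split flow
            refine FB_mono (FB_or (fun i => (nandTree d).relabel (embed d i)) _
              (fun i => {l | x (((nandTree d).relabel (embed d i)).label l) = true})
              (fun i l => Iff.rfl) (fun _ => (1/2 : ℝ)) (by norm_num)
              (fun i => (2:ℝ) ^ maxFaultA d (half d i x) * 2)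
              (fun i _ => hA i (by fin_cases i <;> assumption))) ?_
            have hm : maxFaultA (d + 1) x =
                max (maxFaultA d (half d 0 x)) (maxFaultA d (half d 1 x)) := by
              simp [maxFaultA, hd1', hL, hR]
            rw [hm, if_neg hd1']
            have b0 := two_pow_le_max_left (maxFaultA d (half d 0 x)) (maxFaultA d (half d 1 x))
            have b1 := two_pow_le_max_right (maxFaultA d (half d 0 x)) (maxFaultA d (half d 1 x))
            nlinarith
        · -- dual: series
          intro hx
          rw [hform, eval_or_two, hev 0, hev 1, Bool.or_eq_false_iff] at hx
          have hboth : ∀ i : Fin 2, (nandTree d).eval (half d i x) = false := by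
            intro i; fin_cases i
            · exact hx.1
            · exact hx.2
          have hB : ∀ i : Fin 2, FB ((dualF (nandTree d)).relabel (embed d i))
              {l | x (((dualF (nandTree d)).relabel (embed d i)).label l) = false}
              ((2:ℝ) ^ maxFaultB d (half d i x) * (1/2)) := by
            intro i
            have := transferB i (hboth i)
            rwa [if_pos hd] at this
          rw [hdual]
          refine FB_mono (FB_and (fun i => (dualF (nandTree d)).relabel (embed d i)) _
            (fun i => {l | x (((dualF (nandTree d)).relabel (embed d i)).label l) = false})
            (fun i l => Iff.rfl)
            (fun i => (2:ℝ) ^ maxFaultB d (half d i x) * (1/2)) hB) ?_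
          have hm : maxFaultB (d + 1) x =
              max (maxFaultB d (half d 0 x)) (maxFaultB d (half d 1 x)) := by
            simp [maxFaultB, hd1']
          rw [hm, if_neg hd1']
          have b0 := two_pow_le_max_left (maxFaultB d (half d 0 x)) (maxFaultB d (half d 1 x))
          have b1 := two_pow_le_max_right (maxFaultB d (half d 0 x)) (maxFaultB d (half d 1 x))
          linarith

end STConn

open STConn Formula in
/-- Effective resistance versus fault complexity for NAND-trees, with unit edge
weights.  If `d` is even then `R_{s,t}(G_{NAND_d}(x)) ≤ F_A(x)` and
`R_{s',t'}(G'_{NAND_d}(x)) ≤ F_B(x)`; if `d` is odd then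
`R_{s,t}(G_{NAND_d}(x)) ≤ 2·F_A(x)` and `R_{s',t'}(G'_{NAND_d}(x)) ≤ 2·F_B(x)`
(both sides may be `∞`).  The dual graph is realized as the graph of the
De Morgan dual formula. -/
theorem stmt_16 (d : ℕ) (x : Fin (2 ^ d) → Bool) :
    (d % 2 = 0 →
      effResOn (nandTree d).ends (fun _ => (1 : ℝ))
          {l | x ((nandTree d).label l) = true}
          (nandTree d).src (nandTree d).snk ≤ faultA d x ∧
      effResOn (dualF (nandTree d)).ends (fun _ => (1 : ℝ))
          {l | x ((dualF (nandTree d)).label l) = false}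
          (dualF (nandTree d)).src (dualF (nandTree d)).snk ≤ faultB d x) ∧
    (d % 2 = 1 →
      effResOn (nandTree d).ends (fun _ => (1 : ℝ))
          {l | x ((nandTree d).label l) = true}
          (nandTree d).src (nandTree d).snk ≤ 2 * faultA d x ∧
      effResOn (dualF (nandTree d)).ends (fun _ => (1 : ℝ))
          {l | x ((dualF (nandTree d)).label l) = false}
          (dualF (nandTree d)).src (dualF (nandTree d)).snk ≤ 2 * faultB d x) := by

  have h2 : (0:ℝ) ≤ 2 := by norm_num
  constructor
  · intro hd
    constructor
    · cases hval : (nandTree d).eval x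
      · rw [faultA, if_neg (by simp [hval])]
        exact le_top
      · have hFB := (main_lemma d x).1 hval
        rw [if_neg (by omega), mul_one] at hFB
        refine le_trans (effResOn_le_of_FB hFB) ?_
        rw [faultA, if_pos hval, ENNReal.ofReal_pow h2, ENNReal.ofReal_ofNat]
    · cases hval : (nandTree d).eval x
      · have hFB := (main_lemma d x).2 hval
        rw [if_neg (by omega), mul_one] at hFB
        refine le_trans (effResOn_le_of_FB hFB) ?_
        rw [faultB, if_pos hval, ENNReal.ofReal_pow h2, ENNReal.ofReal_ofNat]
      · rw [faultB, if_neg (by simp [hval])]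
        exact le_top
  · intro hd
    constructor
    · cases hval : (nandTree d).eval x
      · rw [faultA, if_neg (by simp [hval]), ENNReal.mul_top (by norm_num)]
        exact le_top
      · have hFB := (main_lemma d x).1 hval
        rw [if_pos hd] at hFB
        refine le_trans (effResOn_le_of_FB hFB) ?_
        rw [faultA, if_pos hval, ENNReal.ofReal_mul (pow_nonneg h2 _),
          ENNReal.ofReal_pow h2, ENNReal.ofReal_ofNat, mul_comm]
    · cases hval : (nandTree d).eval x
      · have hFB := (main_lemma d x).2 hval
        rw [if_pos hd] at hFB
        have hFB' := FB_mono hFB (by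
          have : (2:ℝ) ^ maxFaultB d x * (1/2) ≤ 2 ^ maxFaultB d x * 2 :=
            mul_le_mul_of_nonneg_left (by norm_num) (pow_nonneg h2 _)
          exact this)
        refine le_trans (effResOn_le_of_FB hFB') ?_
        rw [faultB, if_pos hval, ENNReal.ofReal_mul (pow_nonneg h2 _),
          ENNReal.ofReal_pow h2, ENNReal.ofReal_ofNat, mul_comm]
      · rw [faultB, if_neg (by simp [hval]), ENNReal.mul_top (by norm_num)]
        exact le_top
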